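/- Let ϖ be a real differentiable function of one variable with ϖ and ϖ′ nowhere zero on an interval, and let h₀ ≠ 0 be a real constant. Define h₄ := −ϖ² and h₃ := h₀² (ϖ′)². Then on that interval: (i) |h₄′| / √(|h₃ h₄|) = 2/|h₀| is constant, so the generating function φ = ln(|h₄′|/√(|h₃h₄|)) is constant and φ′ = 0; and (ii) h₄′ = −2ϖϖ′ is nowhere zero. Hence the pair (h₃, h₄) solves the effective vacuum equation φ* h₄* = 0 (equation (ep2a)) with h₄* ≠ 0, i.e. it realizes the second class of off-diagonal effective vacuum EYMH solutions of Corollary 3.2, equivalently √|h₃| = ±h₀ (√|h₄|)′ (relation (rel1)). -/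

import Mathlib

/- STATEMENT 16 (second class of effective vacuum solutions, Corollary 3.2):
for h₄ = −ϖ², h₃ = h₀²(ϖ′)² with ϖ, ϖ′ nowhere zero on an interval, the
generating function φ = ln(|h₄′|/√|h₃h₄|) is constant (= ln(2/|h₀|)), φ′ = 0,
h₄′ = −2ϖϖ′ ≠ 0, and hence φ* h₄* = 0 (equation (ep2a)) holds with h₄* ≠ 0. -/

theorem effective_vacuum_second_class
    (a b h₀ : ℝ) (hh₀ : h₀ ≠ 0) (ϖ : ℝ → ℝ)
    (hϖd : ∀ t ∈ Set.Ioo a b, DifferentiableAt ℝ ϖ t)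
    (hϖ0 : ∀ t ∈ Set.Ioo a b, ϖ t ≠ 0)
    (hϖ'0 : ∀ t ∈ Set.Ioo a b, deriv ϖ t ≠ 0)
    (h₃ h₄ : ℝ → ℝ)
    (hh₄ : h₄ = fun t => -(ϖ t) ^ 2)
    (hh₃ : h₃ = fun t => h₀ ^ 2 * (deriv ϖ t) ^ 2)
    (φ : ℝ → ℝ)
    (hφ : φ = fun t => Real.log (|deriv h₄ t| / Real.sqrt |h₃ t * h₄ t|)) :
    ∀ t ∈ Set.Ioo a b,
      -- (i) the ratio |h₄′|/√|h₃h₄| is the constant 2/|h₀|, so φ is constant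
      |deriv h₄ t| / Real.sqrt |h₃ t * h₄ t| = 2 / |h₀| ∧
      deriv φ t = 0 ∧
      -- (ii) h₄′ = −2ϖϖ′ is nowhere zero
      deriv h₄ t = -2 * ϖ t * deriv ϖ t ∧ deriv h₄ t ≠ 0 ∧
      -- hence (h₃, h₄) solves the effective vacuum equation φ* h₄* = 0 with h₄* ≠ 0
      deriv φ t * deriv h₄ t = 0 := by

  have hd4 : ∀ t ∈ Set.Ioo a b, deriv h₄ t = -2 * ϖ t * deriv ϖ t := by
    intro t ht
    rw [hh₄]
    have h1 : deriv (fun t => -(ϖ t ^ 2)) t = -(deriv (fun t => ϖ t ^ 2) t) := deriv.fun_neg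
    rw [h1, deriv_fun_pow (hϖd t ht) 2]
    ring
  have key : ∀ t ∈ Set.Ioo a b,
      |deriv h₄ t| / Real.sqrt |h₃ t * h₄ t| = 2 / |h₀| := by
    intro t ht
    have h1 : |deriv h₄ t| = 2 * |ϖ t| * |deriv ϖ t| := by
      rw [hd4 t ht, abs_mul, abs_mul]
      norm_num
    have h2 : h₃ t * h₄ t = -(h₀ * deriv ϖ t * ϖ t) ^ 2 := by
      rw [hh₃, hh₄]; ring
    have h3 : Real.sqrt |h₃ t * h₄ t| = |h₀| * |deriv ϖ t| * |ϖ t| := by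
      rw [h2, abs_neg, abs_pow, sq_abs, Real.sqrt_sq_eq_abs, abs_mul, abs_mul]
    rw [h1, h3]
    have := hϖ0 t ht
    have := hϖ'0 t ht
    field_simp
  intro t ht
  have hmem : Set.Ioo a b ∈ nhds t := Ioo_mem_nhds ht.1 ht.2
  have hev : φ =ᶠ[nhds t] fun _ => Real.log (2 / |h₀|) := by
    filter_upwards [hmem] with s hs
    rw [hφ]
    simp only []
    rw [key s hs]
  have hφ' : deriv φ t = 0 := by
    rw [hev.deriv_eq, deriv_const]
  have hne : deriv h₄ t ≠ 0 := by
    rw [hd4 t ht]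
    exact mul_ne_zero (mul_ne_zero (by norm_num) (hϖ0 t ht)) (hϖ'0 t ht)
  exact ⟨key t ht, hφ', hd4 t ht, hne, by rw [hφ']; ring⟩
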